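/- Let I ⊆ ℝ be an interval, λ(t) = (t, 0), α: I → ℝ³ twice continuously differentiable, β: I → ℝ³ continuously differentiable, such that for every t ∈ I the vectors α′(t) and β(t) are lightlike, Lorentz-orthogonal, and (α′(t), β(t)) ≠ (0, 0). Let G be as in Proposition 3.1 (G = (α₁′+iα₂′)/α₃′ where α′ ≠ 0, G = (β₁+iβ₂)/β₃ where β₃ ≠ 0). Then [for all t ∈ I: α′(t) = 0 in ℝ³ and G′(t) ≠ 0] holds if and only if [α is constant on I and for all t ∈ I: β₁(t)β₂′(t) − β₂(t)β₁′(t) ≠ 0]. -/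

import Mathlib

theorem stmt_7 (I : Set ℝ) (hI : I.OrdConnected) (hInt : I.Nontrivial)
    (α α' α'' β β' : ℝ → Fin 3 → ℝ) (G G' : ℝ → ℂ)
    (hα : ∀ t ∈ I, ∀ j, HasDerivWithinAt (fun s => α s j) (α' t j) I t)
    (hα' : ∀ t ∈ I, ∀ j, HasDerivWithinAt (fun s => α' s j) (α'' t j) I t)
    (hα''c : ∀ j, ContinuousOn (fun s => α'' s j) I)
    (hβ : ∀ t ∈ I, ∀ j, HasDerivWithinAt (fun s => β s j) (β' t j) I t)
    (hβ'c : ∀ j, ContinuousOn (fun s => β' s j) I)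
    (hnullα : ∀ t ∈ I, α' t 0 ^ 2 + α' t 1 ^ 2 = α' t 2 ^ 2)
    (hnullβ : ∀ t ∈ I, β t 0 ^ 2 + β t 1 ^ 2 = β t 2 ^ 2)
    (horth : ∀ t ∈ I, α' t 0 * β t 0 + α' t 1 * β t 1 = α' t 2 * β t 2)
    (hne : ∀ t ∈ I, ¬ (α' t = 0 ∧ β t = 0))
    (hG : ∀ t ∈ I, HasDerivWithinAt G (G' t) I t)
    (hGα : ∀ t ∈ I, α' t ≠ 0 →
      G t = ((α' t 0 : ℂ) + Complex.I * (α' t 1 : ℂ)) / (α' t 2 : ℂ))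
    (hGβ : ∀ t ∈ I, β t 2 ≠ 0 →
      G t = ((β t 0 : ℂ) + Complex.I * (β t 1 : ℂ)) / (β t 2 : ℂ)) :
    (∀ t ∈ I, α' t = 0 ∧ G' t ≠ 0) ↔
    ((∀ t ∈ I, ∀ s ∈ I, α t = α s) ∧
      ∀ t ∈ I, β t 0 * β' t 1 - β t 1 * β' t 0 ≠ 0) := by
  have hconv : Convex ℝ I := convex_iff_ordConnected.mpr hI
  -- nonempty interior
  have hint : (interior I).Nonempty := by
    obtain ⟨a, ha, b, hb, hab⟩ := hInt
    have hmin : min a b ∈ I := by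
      rcases le_total a b with h | h
      · simpa [min_eq_left h] using ha
      · simpa [min_eq_right h] using hb
    have hmax : max a b ∈ I := by
      rcases le_total a b with h | h
      · simpa [max_eq_right h] using hb
      · simpa [max_eq_left h] using ha
    have hsub : Set.Ioo (min a b) (max a b) ⊆ I :=
      Set.Ioo_subset_Icc_self.trans (hI.out hmin hmax)
    refine ⟨(a + b) / 2, interior_maximal hsub isOpen_Ioo ?_⟩
    rcases hab.lt_or_gt with h | h <;>
      constructor <;> simp [min_def, max_def, le_of_lt h] <;> linarith
  have hud : ∀ t ∈ I, UniqueDiffWithinAt ℝ I t := fun t ht =>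
    uniqueDiffWithinAt_convex hconv hint (subset_closure ht)
  -- derivative of the null relation for β
  have hrel : ∀ t ∈ I, β t 0 * β' t 0 + β t 1 * β' t 1 = β t 2 * β' t 2 := by
    intro t ht
    have h1 : HasDerivWithinAt (fun s => β s 0 ^ 2 + β s 1 ^ 2 - β s 2 ^ 2)
        (2 * β t 0 * β' t 0 + 2 * β t 1 * β' t 1 - 2 * β t 2 * β' t 2) I t := by
      have := (((hβ t ht 0).pow 2).add ((hβ t ht 1).pow 2)).sub ((hβ t ht 2).pow 2)
      exact this.congr_deriv (by norm_num)
    have h2 : HasDerivWithinAt (fun s => β s 0 ^ 2 + β s 1 ^ 2 - β s 2 ^ 2) 0 I t :=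
      (hasDerivWithinAt_const t I (0 : ℝ)).congr
        (fun s hs => by have := hnullβ s hs; linarith)
        (by have := hnullβ t ht; linarith)
    have heq : 2 * β t 0 * β' t 0 + 2 * β t 1 * β' t 1 - 2 * β t 2 * β' t 2 = 0 := by
      rw [← h1.derivWithin (hud t ht), h2.derivWithin (hud t ht)]
    linarith
  -- key equivalence at points where β₂ never vanishes on I
  have key : ∀ t ∈ I, (∀ s ∈ I, β s 2 ≠ 0) →
      (G' t ≠ 0 ↔ β t 0 * β' t 1 - β t 1 * β' t 0 ≠ 0) := by
    intro t ht hall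
    have hc0 : β t 2 ≠ 0 := hall t ht
    have hc0' : (β t 2 : ℂ) ≠ 0 := by exact_mod_cast hc0
    set D : ℂ := (((β' t 0 : ℂ) + Complex.I * (β' t 1 : ℂ)) * (β t 2 : ℂ) -
        ((β t 0 : ℂ) + Complex.I * (β t 1 : ℂ)) * (β' t 2 : ℂ)) / (β t 2 : ℂ) ^ 2 with hD
    -- f has derivative D within I at t
    have hnum : HasDerivWithinAt (fun s => ((β s 0 : ℂ) + Complex.I * (β s 1 : ℂ)))
        ((β' t 0 : ℂ) + Complex.I * (β' t 1 : ℂ)) I t := by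
      have h0 : HasDerivWithinAt (fun s => ((β s 0 : ℝ) : ℂ)) ((β' t 0 : ℝ) : ℂ) I t := by
        exact (hβ t ht 0).ofReal_comp
      have h1 : HasDerivWithinAt (fun s => ((β s 1 : ℝ) : ℂ)) ((β' t 1 : ℝ) : ℂ) I t := by
        exact (hβ t ht 1).ofReal_comp
      exact h0.add (h1.const_mul Complex.I)
    have hden : HasDerivWithinAt (fun s => ((β s 2 : ℝ) : ℂ)) ((β' t 2 : ℝ) : ℂ) I t := by
      exact (hβ t ht 2).ofReal_comp
    have hfD : HasDerivWithinAt
        (fun s => ((β s 0 : ℂ) + Complex.I * (β s 1 : ℂ)) / (β s 2 : ℂ)) D I t :=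
      hnum.div hden hc0'
    have hGD : HasDerivWithinAt G D I t :=
      hfD.congr (fun s hs => hGβ s hs (hall s hs)) (hGβ t ht hc0)
    have hG'D : G' t = D := by
      rw [← (hG t ht).derivWithin (hud t ht), hGD.derivWithin (hud t ht)]
    -- the numerator vanishes iff the cross term vanishes
    have hprod : ((β t 0 : ℂ) - Complex.I * (β t 1 : ℂ)) *
        (((β' t 0 : ℂ) + Complex.I * (β' t 1 : ℂ)) * (β t 2 : ℂ) -
          ((β t 0 : ℂ) + Complex.I * (β t 1 : ℂ)) * (β' t 2 : ℂ)) =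
        Complex.I * (((β t 0 * β' t 1 - β t 1 * β' t 0) * β t 2 : ℝ) : ℂ) := by
      have h1 := hrel t ht
      have h2 := hnullβ t ht
      rw [Complex.ext_iff]
      constructor
      · simp [Complex.mul_re, Complex.mul_im]
        linear_combination β t 2 * h1 - β' t 2 * h2
      · simp [Complex.mul_re, Complex.mul_im]
        ring
    have hu0 : ((β t 0 : ℂ) - Complex.I * (β t 1 : ℂ)) ≠ 0 := by
      intro h
      have : ((β t 0 : ℂ) - Complex.I * (β t 1 : ℂ)) *
          ((β t 0 : ℂ) + Complex.I * (β t 1 : ℂ)) = ((β t 2 : ℝ) : ℂ) ^ 2 := by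
        have h2 := hnullβ t ht
        have : ((β t 0 : ℂ)) ^ 2 + ((β t 1 : ℂ)) ^ 2 = ((β t 2 : ℂ)) ^ 2 := by
          exact_mod_cast h2
        linear_combination this - (β t 1 : ℂ) ^ 2 * Complex.I_sq
      rw [h, zero_mul] at this
      exact (pow_ne_zero 2 hc0') this.symm
    rw [hG'D, hD]
    rw [div_ne_zero_iff]
    constructor
    · rintro ⟨hnum0, -⟩ hcr0
      apply hnum0
      have := hprod
      rw [hcr0] at this
      simp at this
      rcases this with h | h
      · exact absurd h hu0
      · exact h
    · intro hcr
      refine ⟨?_, pow_ne_zero 2 hc0'⟩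
      intro h0
      rw [h0, mul_zero] at hprod
      have : (((β t 0 * β' t 1 - β t 1 * β' t 0) * β t 2 : ℝ) : ℂ) = 0 := by
        rcases mul_eq_zero.1 hprod.symm with h | h
        · exact absurd h Complex.I_ne_zero
        · exact h
      have : (β t 0 * β' t 1 - β t 1 * β' t 0) * β t 2 = 0 := by exact_mod_cast this
      rcases mul_eq_zero.1 this with h | h
      · exact hcr h
      · exact hc0 h
  -- β never vanishes in third coordinate once cross term is nonzero, or once α' = 0
  constructor
  · intro h
    have hall : ∀ s ∈ I, β s 2 ≠ 0 := by
      intro s hs hs2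
      have hα0 : α' s = 0 := (h s hs).1
      have hβ0 : β s = 0 := by
        have h2 := hnullβ s hs
        rw [hs2] at h2
        funext j
        fin_cases j <;> simp <;> nlinarith [h2]
      exact hne s hs ⟨hα0, hβ0⟩
    refine ⟨?_, fun t ht => (key t ht hall).1 (h t ht).2⟩
    intro t ht s hs
    funext j
    have hdiff : DifferentiableOn ℝ (fun s => α s j) I :=
      fun u hu => (hα u hu j).differentiableWithinAt
    have hf0 : ∀ u ∈ I, fderivWithin ℝ (fun s => α s j) I u = 0 := by
      intro u hu
      have h0 : α' u j = 0 := by rw [(h u hu).1]; rfl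
      have := (hα u hu j).hasFDerivWithinAt.fderivWithin (hud u hu)
      rw [this, h0]
      exact ContinuousLinearMap.ext fun x => by simp
    exact hconv.is_const_of_fderivWithin_eq_zero hdiff hf0 ht hs
  · rintro ⟨hconst, hcross⟩ t ht
    have hall : ∀ s ∈ I, β s 2 ≠ 0 := by
      intro s hs hs2
      have h2 := hnullβ s hs
      rw [hs2] at h2
      have h0 : β s 0 = 0 := by nlinarith [h2]
      have h1 : β s 1 = 0 := by nlinarith [h2]
      apply hcross s hs
      rw [h0, h1]
      ring
    refine ⟨?_, (key t ht hall).2 (hcross t ht)⟩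
    funext j
    have hc : HasDerivWithinAt (fun s => α s j) 0 I t :=
      (hasDerivWithinAt_const t I (α t j)).congr
        (fun s hs => by rw [hconst s hs t ht]) rfl
    have := (hα t ht j).derivWithin (hud t ht)
    rw [← this, hc.derivWithin (hud t ht)]
    rfl
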